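/- Let X be a separable reflexive Banach space (i.e. the canonical embedding J : X → X** is surjective) and let T be a bounded linear operator on X. Then T is chaotic if and only if there exists x ∈ X such that for each nonempty open set U ⊆ X the set N_T(x,U) contains arbitrarily long arithmetic progressions of common difference k for some fixed k ≥ 1 (i.e. T is AP_b-hypercyclic). -/

import Mathlib

open NormedSpace Filter Metric Topology

/-- A set `A ⊆ ℕ` belongs to the family `AP_b` if it contains arbitrarily long
arithmetic progressions with some fixed common difference `k ≥ 1`. -/
def APb (A : Set ℕ) : Prop :=
  ∃ k : ℕ, 1 ≤ k ∧ ∀ m : ℕ, ∃ a : ℕ, ∀ j : ℕ, j ≤ m → a + j * k ∈ A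

section Aux

variable {X : Type*} [NormedAddCommGroup X] [NormedSpace ℝ X]

lemma normJ (v : X) : ‖NormedSpace.inclusionInDoubleDual ℝ X v‖ = ‖v‖ :=
  (inclusionInDoubleDualLi ℝ (E := X)).norm_map v

/-- In a reflexive space, if a sequence stays in a closed ball and `A` of it tends to zero
in norm, then there is a point of the closed ball killed by `A` (weak compactness argument). -/
lemma exists_zero_of_reflexive
    (hrefl : Function.Surjective (NormedSpace.inclusionInDoubleDual ℝ X))
    (A : X →L[ℝ] X) (z : X) (ε : ℝ) (y : ℕ → X)
    (hy : ∀ m, ‖y m - z‖ ≤ ε)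
    (hA : Tendsto (fun m => A (y m)) atTop (𝓝 0)) :
    ∃ w : X, ‖w - z‖ ≤ ε ∧ A w = 0 := by
  set J := NormedSpace.inclusionInDoubleDual ℝ X with hJ
  set P : StrongDual ℝ X →L[ℝ] StrongDual ℝ X := (ContinuousLinearMap.compL ℝ X X ℝ).flip A with hP
  set Φ : WeakDual ℝ (StrongDual ℝ X) → WeakDual ℝ (StrongDual ℝ X) :=
    fun f => StrongDual.toWeakDual ((WeakDual.toStrongDual f).comp P) with hΦ
  have hΦcont : Continuous Φ := by
    apply WeakDual.continuous_of_continuous_eval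
    intro g
    exact (WeakDual.eval_continuous (P g)).congr fun f => rfl
  have hK : IsCompact (WeakDual.toStrongDual ⁻¹' closedBall (J z) ε) :=
    WeakDual.isCompact_closedBall (𝕜 := ℝ) (J z) ε
  set u : ℕ → WeakDual ℝ (StrongDual ℝ X) := fun m => StrongDual.toWeakDual (J (y m)) with hu
  have humem : ∀ m, u m ∈ WeakDual.toStrongDual ⁻¹' closedBall (J z) ε := by
    intro m
    have h1 : WeakDual.toStrongDual (u m) = J (y m) := rfl
    simp only [Set.mem_preimage, mem_closedBall, dist_eq_norm, h1]
    rw [show dist (J (y m)) (J z) = ‖y m - z‖ from ((inclusionInDoubleDualLi ℝ (E := X)).isometry.dist_eq (y m) z).trans (dist_eq_norm _ _)]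
    exact hy m
  obtain ⟨xs, hxsK, hclus⟩ := hK.exists_mapClusterPt (u := u) (f := atTop)
    (Filter.le_principal_iff.mpr (Filter.mem_map.mpr (Filter.Eventually.of_forall humem)))
  obtain ⟨w, hw⟩ := hrefl (WeakDual.toStrongDual xs)
  have hwz : ‖w - z‖ ≤ ε := by
    have h2 := hxsK
    rw [Set.mem_preimage, mem_closedBall, ← hw, show dist (J w) (J z) = ‖w - z‖ from ((inclusionInDoubleDualLi ℝ (E := X)).isometry.dist_eq w z).trans (dist_eq_norm _ _)] at h2
    exact h2
  have hxs : xs = StrongDual.toWeakDual (J w) := by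
    rw [hw]; rfl
  refine ⟨w, hwz, ?_⟩
  have h2 : MapClusterPt (Φ xs) atTop (Φ ∘ u) := hclus.continuousAt_comp hΦcont.continuousAt
  have hΦu : (Φ ∘ u) = fun m => StrongDual.toWeakDual (J (A (y m))) := rfl
  have htend : Tendsto (Φ ∘ u) atTop (𝓝 0) := by
    rw [hΦu]
    have h0 : Tendsto (fun m => J (A (y m))) atTop (𝓝 (0 : StrongDual ℝ (StrongDual ℝ X))) := by
      have := (J.continuous.tendsto 0).comp hA
      rwa [map_zero] at this
    have := (NormedSpace.Dual.toWeakDual_continuous.tendsto (0 : StrongDual ℝ (StrongDual ℝ X))).comp h0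
    exact this
  have hE : Φ xs = 0 := by
    have hne : (𝓝 (Φ xs) ⊓ map (Φ ∘ u) atTop).NeBot := h2
    have hne2 : (𝓝 (Φ xs) ⊓ 𝓝 0).NeBot :=
      hne.mono (inf_le_inf_left _ htend)
    exact eq_of_nhds_neBot hne2
  have hE2 : StrongDual.toWeakDual (J (A w)) = 0 := by
    rw [← hE, hxs]; rfl
  have hE3 : J (A w) = 0 := by
    have hinj := (StrongDual.toWeakDual (E := StrongDual ℝ X) (𝕜 := ℝ)).injective
    exact hinj (by simpa using hE2)
  have hnorm0 : ‖A w‖ = 0 := by rw [← normJ (A w), hE3, norm_zero (E := StrongDual ℝ (StrongDual ℝ X))]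
  exact norm_eq_zero.mp hnorm0

end Aux

/-- Let `X` be a separable reflexive Banach space (the canonical
embedding `J : X → X**` is surjective) and `T` a bounded linear operator on `X`.
Then `T` is chaotic if and only if `T` is `AP_b`-hypercyclic. -/
theorem chaotic_iff_APb_hypercyclic_on_reflexive
    {X : Type*} [NormedAddCommGroup X] [NormedSpace ℝ X] [CompleteSpace X]
    [TopologicalSpace.SeparableSpace X]
    (hrefl : Function.Surjective (NormedSpace.inclusionInDoubleDual ℝ X))
    (T : X →L[ℝ] X) :
    ((∃ x : X, Dense (Set.range fun n : ℕ => (T ^ n) x)) ∧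
      Dense {x : X | ∃ n : ℕ, 1 ≤ n ∧ (T ^ n) x = x}) ↔
    (∃ x : X, ∀ U : Set X, IsOpen U → U.Nonempty → APb {n : ℕ | (T ^ n) x ∈ U}) := by
  constructor
  · rintro ⟨⟨x, hx⟩, hper⟩
    refine ⟨x, fun U hU hUne => ?_⟩
    obtain ⟨p, ⟨k, hk1, hpk⟩, hpU⟩ := hper.exists_mem_open hU hUne
    obtain ⟨δ, hδ, hball⟩ := Metric.isOpen_iff.mp hU p hpU
    refine ⟨k, hk1, fun m => ?_⟩
    set C : ℝ := max 1 ‖T ^ k‖ with hC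
    have hC1 : (1 : ℝ) ≤ C := le_max_left _ _
    have hCm : (0 : ℝ) < C ^ m := pow_pos (lt_of_lt_of_le one_pos hC1) m
    have hballs : (Metric.ball p (δ / C ^ m)).Nonempty :=
      ⟨p, Metric.mem_ball_self (div_pos hδ hCm)⟩
    obtain ⟨v, ⟨a, rfl⟩, hv⟩ := hx.exists_mem_open Metric.isOpen_ball hballs
    have hva : ‖(T ^ a) x - p‖ < δ / C ^ m := mem_ball_iff_norm.mp hv
    refine ⟨a, fun j hj => ?_⟩
    have hnormpow : ‖(T ^ k) ^ j‖ ≤ C ^ m := by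
      have h1 : ‖(T ^ k) ^ j‖ ≤ C ^ j := by
        rcases Nat.eq_zero_or_pos j with h | h
        · subst h
          rw [pow_zero, pow_zero]; exact ContinuousLinearMap.norm_id_le
        · calc ‖(T ^ k) ^ j‖ ≤ ‖T ^ k‖ ^ j := norm_pow_le' _ h
            _ ≤ C ^ j := pow_le_pow_left₀ (norm_nonneg _) (le_max_right _ _) j
      exact h1.trans (pow_le_pow_right₀ hC1 hj)
    have hfix : ∀ i : ℕ, ((T ^ k) ^ i) p = p := by
      intro i
      induction i with
      | zero => rfl
      | succ n ih =>
        rw [pow_succ']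
        show (T ^ k) (((T ^ k) ^ n) p) = p
        rw [ih, hpk]
    have heq : (T ^ (a + j * k)) x = ((T ^ k) ^ j) ((T ^ a) x) := by
      have he : a + j * k = k * j + a := by ring
      rw [he, ← ContinuousLinearMap.mul_apply, ← pow_mul, ← pow_add]
    have hlt : ‖(T ^ (a + j * k)) x - p‖ < δ := by
      rw [heq, ← hfix j, ← map_sub]
      calc ‖((T ^ k) ^ j) ((T ^ a) x - p)‖
          ≤ ‖(T ^ k) ^ j‖ * ‖(T ^ a) x - p‖ := ContinuousLinearMap.le_opNorm _ _
        _ ≤ C ^ m * ‖(T ^ a) x - p‖ :=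
            mul_le_mul_of_nonneg_right hnormpow (norm_nonneg _)
        _ < C ^ m * (δ / C ^ m) := mul_lt_mul_of_pos_left hva hCm
        _ = δ := by field_simp
    exact hball (mem_ball_iff_norm.mpr hlt)
  · rintro ⟨x, hAP⟩
    constructor
    · refine ⟨x, dense_iff_inter_open.mpr fun U hU hUne => ?_⟩
      obtain ⟨k, hk1, h⟩ := hAP U hU hUne
      obtain ⟨a, ha⟩ := h 0
      have h0 := ha 0 le_rfl
      simp only [Set.mem_setOf_eq, Nat.zero_mul, Nat.add_zero] at h0
      exact ⟨(T ^ a) x, h0, ⟨a, rfl⟩⟩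
    · rw [Metric.dense_iff]
      intro z ε hε
      have hballne : (Metric.ball z (ε / 2)).Nonempty :=
        ⟨z, Metric.mem_ball_self (by linarith)⟩
      obtain ⟨k, hk1, h⟩ := hAP (Metric.ball z (ε / 2)) Metric.isOpen_ball hballne
      choose a ha using fun m => h (m + 1)
      set f : ℕ → ℕ → X := fun m j => (T ^ (a m + j * k)) x with hf
      have hfball : ∀ m, ∀ j ≤ m + 1, ‖f m j - z‖ ≤ ε / 2 := by
        intro m j hj
        have h2 : f m j ∈ Metric.ball z (ε / 2) := ha m j hj
        exact (mem_ball_iff_norm.mp h2).le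
      set y : ℕ → X := fun m =>
        ((m : ℝ) + 1)⁻¹ • ∑ j ∈ Finset.range (m + 1), f m j with hy
      have hm1pos : ∀ m : ℕ, (0 : ℝ) < (m : ℝ) + 1 := fun m => by positivity
      have hyz : ∀ m, ‖y m - z‖ ≤ ε / 2 := by
        intro m
        have hsub : y m - z = ((m : ℝ) + 1)⁻¹ • ∑ j ∈ Finset.range (m + 1), (f m j - z) := by
          simp only [hy]
          rw [Finset.sum_sub_distrib, smul_sub, Finset.sum_const, Finset.card_range]
          congr 1
          rw [← Nat.cast_smul_eq_nsmul ℝ, smul_smul]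
          push_cast
          rw [inv_mul_cancel₀ (hm1pos m).ne', one_smul]
        have hsumle : ‖∑ j ∈ Finset.range (m + 1), (f m j - z)‖ ≤ ((m : ℝ) + 1) * (ε / 2) := by
          calc ‖∑ j ∈ Finset.range (m + 1), (f m j - z)‖
              ≤ ∑ j ∈ Finset.range (m + 1), ‖f m j - z‖ := norm_sum_le _ _
            _ ≤ ∑ _j ∈ Finset.range (m + 1), (ε / 2) :=
                Finset.sum_le_sum fun j hj => hfball m j (by
                  have := Finset.mem_range.mp hj; omega)
            _ = ((m : ℝ) + 1) * (ε / 2) := by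
                rw [Finset.sum_const, Finset.card_range, nsmul_eq_mul]
                push_cast; ring
        rw [hsub, norm_smul, Real.norm_eq_abs, abs_of_pos (inv_pos.mpr (hm1pos m))]
        calc ((m : ℝ) + 1)⁻¹ * ‖∑ j ∈ Finset.range (m + 1), (f m j - z)‖
            ≤ ((m : ℝ) + 1)⁻¹ * (((m : ℝ) + 1) * (ε / 2)) :=
              mul_le_mul_of_nonneg_left hsumle (by positivity)
          _ = ε / 2 := by field_simp
      set A : X →L[ℝ] X := T ^ k - 1 with hA
      have hTk : ∀ m j, (T ^ k) (f m j) = f m (j + 1) := by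
        intro m j
        show (T ^ k) ((T ^ (a m + j * k)) x) = (T ^ (a m + (j + 1) * k)) x
        rw [← ContinuousLinearMap.mul_apply, ← pow_add]
        have he : k + (a m + j * k) = a m + (j + 1) * k := by ring
        rw [he]
      have hAy : ∀ m, A (y m) = ((m : ℝ) + 1)⁻¹ • (f m (m + 1) - f m 0) := by
        intro m
        have h1 : A (y m) = (T ^ k) (y m) - y m := by
          simp [hA, ContinuousLinearMap.sub_apply]
        rw [h1]
        simp only [hy]
        rw [map_smul, map_sum]
        simp_rw [hTk]
        rw [← smul_sub, ← Finset.sum_sub_distrib, Finset.sum_range_sub (fun j => f m j)]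
      have hAnorm : ∀ m, ‖A (y m)‖ ≤ ε * ((m : ℝ) + 1)⁻¹ := by
        intro m
        rw [hAy, norm_smul, Real.norm_eq_abs, abs_of_pos (inv_pos.mpr (hm1pos m))]
        have hle : ‖f m (m + 1) - f m 0‖ ≤ ε := by
          have h1 := hfball m (m + 1) le_rfl
          have h0 := hfball m 0 (by omega)
          have hdecomp : f m (m + 1) - f m 0 = (f m (m + 1) - z) - (f m 0 - z) := by abel
          calc ‖f m (m + 1) - f m 0‖ = ‖(f m (m + 1) - z) - (f m 0 - z)‖ := by rw [hdecomp]
            _ ≤ ‖f m (m + 1) - z‖ + ‖f m 0 - z‖ := norm_sub_le _ _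
            _ ≤ ε / 2 + ε / 2 := add_le_add h1 h0
            _ = ε := by ring
        calc ((m : ℝ) + 1)⁻¹ * ‖f m (m + 1) - f m 0‖
            ≤ ((m : ℝ) + 1)⁻¹ * ε := mul_le_mul_of_nonneg_left hle (by positivity)
          _ = ε * ((m : ℝ) + 1)⁻¹ := by ring
      have hAtend : Tendsto (fun m => A (y m)) atTop (𝓝 0) := by
        apply squeeze_zero_norm hAnorm
        have h1 : Tendsto (fun m : ℕ => ((m : ℝ) + 1)) atTop atTop :=
          tendsto_atTop_add_const_right _ 1 tendsto_natCast_atTop_atTop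
        have h2 := h1.inv_tendsto_atTop
        have h3 := h2.const_mul ε
        simpa using h3
      obtain ⟨w, hwz, hAw⟩ := exists_zero_of_reflexive hrefl A z (ε / 2) y hyz hAtend
      have hTw : (T ^ k) w = w := by
        have : (T ^ k) w - w = 0 := by
          have h4 : A w = (T ^ k) w - w := by simp [hA, ContinuousLinearMap.sub_apply]
          rw [← h4, hAw]
        exact sub_eq_zero.mp this
      exact ⟨w, mem_ball_iff_norm.mpr (lt_of_le_of_lt hwz (by linarith)), k, hk1, hTw⟩
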